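/- Under the BPR assumption, let x̃ be a baseline equilibrium (α = 0) and let (x^H, x^A) be an equilibrium with autonomous fraction α ∈ (0,1]. If x^H ≤ x̃ componentwise (x_p^H ≤ x̃_p for every path p), then S(Δ(x^H + x^A)) ≤ S(Δx̃); moreover, the inequality is strict if in addition Δ(x^H + x^A) ≠ Δx̃. -/

import Mathlib

open scoped BigOperators

/-- Aggregated link flow `f = Δ x`. -/
noncomputable def aggFlow {L P : Type*} [Fintype P] (Δ : L → P → ℝ) (x : P → ℝ) : L → ℝ :=
  fun a => ∑ p, Δ a p * x p

/-- Human path cost `C_p^H(f) = Σ_a Δ_{ap} t_a(f_a)`. -/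
noncomputable def CH {L P : Type*} [Fintype L] (Δ : L → P → ℝ) (t : L → ℝ → ℝ)
    (f : L → ℝ) (p : P) : ℝ :=
  ∑ a, Δ a p * t a (f a)

/-- Autonomous (marginal social) path cost
`C_p^A(f) = Σ_a Δ_{ap} (t_a(f_a) + f_a t_a'(f_a))`. -/
noncomputable def CA {L P : Type*} [Fintype L] (Δ : L → P → ℝ) (t : L → ℝ → ℝ)
    (f : L → ℝ) (p : P) : ℝ :=
  ∑ a, Δ a p * (t a (f a) + f a * deriv (t a) (f a))

/-- Social cost `S(f) = Σ_a f_a t_a(f_a)`. -/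
noncomputable def Scost {L : Type*} [Fintype L] (t : L → ℝ → ℝ) (f : L → ℝ) : ℝ :=
  ∑ a, f a * t a (f a)

/-- Equilibrium with autonomous fraction `α`: a feasible path flow pattern
together with multipliers `λ^H, λ^A` satisfying the Wardrop-like conditions. -/
noncomputable def IsEquilibrium {L P : Type*} [Fintype L] [Fintype P]
    (Δ : L → P → ℝ) (t : L → ℝ → ℝ) (α : ℝ) (xH xA : P → ℝ) : Prop :=
  (∀ p, 0 ≤ xH p) ∧ (∀ p, 0 ≤ xA p) ∧ (∑ p, xH p = 1 - α) ∧ (∑ p, xA p = α) ∧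
  ∃ lamH lamA : ℝ, ∀ p : P,
    (lamH ≤ CH Δ t (aggFlow Δ (fun r => xH r + xA r)) p ∧
      (0 < xH p → CH Δ t (aggFlow Δ (fun r => xH r + xA r)) p = lamH)) ∧
    (lamA ≤ CA Δ t (aggFlow Δ (fun r => xH r + xA r)) p ∧
      (0 < xA p → CA Δ t (aggFlow Δ (fun r => xH r + xA r)) p = lamA))

/-- Baseline equilibrium (`α = 0`): a single nonnegative unit-demand path flow
vector satisfying the human Wardrop condition. -/
noncomputable def IsBaselineEquilibrium {L P : Type*} [Fintype L] [Fintype P]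
    (Δ : L → P → ℝ) (t : L → ℝ → ℝ) (xt : P → ℝ) : Prop :=
  (∀ p, 0 ≤ xt p) ∧ (∑ p, xt p = 1) ∧
  ∃ lam : ℝ, ∀ p : P,
    lam ≤ CH Δ t (aggFlow Δ xt) p ∧ (0 < xt p → CH Δ t (aggFlow Δ xt) p = lam)

/-- BPR assumption: `t_a(z) = k_a z^n + b_a` for `z ≥ 0`, with `k_a > 0`,
`b_a ≥ 0`, and exponent `n ≥ 1`. -/
def IsBPR {L : Type*} (t : L → ℝ → ℝ) (n : ℝ) (k b : L → ℝ) : Prop :=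
  1 ≤ n ∧ (∀ a, 0 < k a) ∧ (∀ a, 0 ≤ b a) ∧
  ∀ a, ∀ z : ℝ, 0 ≤ z → t a z = k a * z ^ n + b a


lemma bpr_key (n k b z w c : ℝ) (hn : 1 ≤ n) (hk : 0 < k) (hb : 0 ≤ b)
    (hz : 0 ≤ z) (hw : 0 ≤ w)
    (hc0 : z = 0 → c = b)
    (hcpos : 0 < z → c = k * z ^ n + b + z * (k * (n * z ^ (n - 1)))) :
    z * (k * z ^ n + b) + c * (w - z) ≤ w * (k * w ^ n + b) ∧
    (w ≠ z → z * (k * z ^ n + b) + c * (w - z) < w * (k * w ^ n + b)) := by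
  rcases hz.eq_or_lt with hz0 | hz0
  · -- z = 0
    have hz0' := hz0.symm
    have hc := hc0 hz0'
    have hzn : (0:ℝ) ^ n = 0 := Real.zero_rpow (by linarith)
    subst hz0'
    rw [hc]
    simp only [hzn, sub_zero, mul_zero, zero_mul, zero_add]
    constructor
    · nlinarith [mul_nonneg (mul_nonneg hk.le (Real.rpow_nonneg hw n)) hw]
    · intro hne
      have hwpos : 0 < w := lt_of_le_of_ne hw (Ne.symm hne)
      nlinarith [mul_pos (mul_pos hk (Real.rpow_pos_of_pos hwpos n)) hwpos]
  · -- z > 0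
    have hzne : z ≠ 0 := ne_of_gt hz0
    have hc := hcpos hz0
    set s : ℝ := w / z - 1 with hs_def
    have h1s : 1 + s = w / z := by simp [hs_def]
    have hs : -1 ≤ s := by
      have : 0 ≤ w / z := div_nonneg hw hz
      simp only [hs_def]; linarith
    have hzp : (0:ℝ) < z ^ (n + 1) := Real.rpow_pos_of_pos hz0 _
    have hzsplit : z ^ (n + 1) = z ^ n * z := Real.rpow_add_one hzne n
    have hwsplit : w ^ (n + 1) = w ^ n * w := Real.rpow_add_one' hw (by linarith)
    have hdiv : (1 + s) ^ (n + 1) = w ^ (n + 1) / z ^ (n + 1) := by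
      rw [h1s, Real.div_rpow hw hz]
    have hzs : s * z ^ (n + 1) = z ^ n * (w - z) := by
      rw [hzsplit, hs_def]; field_simp
    have hz1 : z * z ^ (n - 1) = z ^ n := by
      rw [Real.rpow_sub_one hzne]; field_simp
    have hc' : c = k * z ^ n + b + k * (n * z ^ n) := by
      rw [hc, ← hz1]; ring
    constructor
    · have hber : 1 + (n + 1) * s ≤ (1 + s) ^ (n + 1) :=
        one_add_mul_self_le_rpow_one_add hs (by linarith)
      have hmul : (1 + (n + 1) * s) * z ^ (n + 1) ≤ w ^ (n + 1) := by
        rw [hdiv] at hber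
        calc (1 + (n + 1) * s) * z ^ (n + 1)
            ≤ w ^ (n + 1) / z ^ (n + 1) * z ^ (n + 1) :=
              mul_le_mul_of_nonneg_right hber hzp.le
          _ = w ^ (n + 1) := by field_simp
      -- expand
      have hexp : (1 + (n + 1) * s) * z ^ (n + 1) = z ^ n * z + (n + 1) * (z ^ n * (w - z)) := by
        rw [add_mul, one_mul, mul_assoc, hzs, hzsplit]
      rw [hexp, hwsplit] at hmul
      rw [hc']
      nlinarith [mul_le_mul_of_nonneg_left hmul hk.le]
    · intro hne
      have hsne : s ≠ 0 := by
        simp only [hs_def, sub_ne_zero]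
        intro h; exact hne (by field_simp at h; linarith)
      have hber : 1 + (n + 1) * s < (1 + s) ^ (n + 1) :=
        one_add_mul_self_lt_rpow_one_add hs hsne (by linarith)
      have hmul : (1 + (n + 1) * s) * z ^ (n + 1) < w ^ (n + 1) := by
        rw [hdiv] at hber
        calc (1 + (n + 1) * s) * z ^ (n + 1)
            < w ^ (n + 1) / z ^ (n + 1) * z ^ (n + 1) :=
              mul_lt_mul_of_pos_right hber hzp
          _ = w ^ (n + 1) := by field_simp
      have hexp : (1 + (n + 1) * s) * z ^ (n + 1) = z ^ n * z + (n + 1) * (z ^ n * (w - z)) := by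
        rw [add_mul, one_mul, mul_assoc, hzs, hzsplit]
      rw [hexp, hwsplit] at hmul
      rw [hc']
      nlinarith [mul_lt_mul_of_pos_left hmul hk]

/-- Lemma 3 (improvement condition): under the BPR assumption, if `x̃` is a
baseline equilibrium (`α = 0`), `(x^H, x^A)` is an equilibrium with autonomous
fraction `α ∈ (0,1]`, and `x^H ≤ x̃` componentwise, then the mixed-autonomy social
cost does not exceed the baseline social cost; the inequality is strict whenever
the aggregated link flows differ. -/
theorem improvement_condition {L P : Type*} [Fintype L] [Fintype P] [Nonempty P]
    (Δ : L → P → ℝ) (hΔ : ∀ a p, Δ a p = 0 ∨ Δ a p = 1)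
    (t : L → ℝ → ℝ) (n : ℝ) (k b : L → ℝ) (hBPR : IsBPR t n k b)
    (α : ℝ) (hα : α ∈ Set.Ioc (0:ℝ) 1)
    (xt : P → ℝ) (hxt : IsBaselineEquilibrium Δ t xt)
    (xH xA : P → ℝ) (heq : IsEquilibrium Δ t α xH xA)
    (hle : ∀ p, xH p ≤ xt p) :
    Scost t (aggFlow Δ (fun r => xH r + xA r)) ≤ Scost t (aggFlow Δ xt) ∧
    (aggFlow Δ (fun r => xH r + xA r) ≠ aggFlow Δ xt →
      Scost t (aggFlow Δ (fun r => xH r + xA r)) < Scost t (aggFlow Δ xt)) := by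
  obtain ⟨hn, hk, hb, ht⟩ := hBPR
  obtain ⟨hxt0, hxtsum, -⟩ := hxt
  obtain ⟨hH0, hA0, hHsum, hAsum, lamH, lamA, hwar⟩ := heq
  set f : L → ℝ := aggFlow Δ (fun r => xH r + xA r) with hf_def
  set ft : L → ℝ := aggFlow Δ xt with hft_def
  have hΔ0 : ∀ a p, 0 ≤ Δ a p := by
    intro a p; rcases hΔ a p with h | h <;> simp [h]
  have hf0 : ∀ a, 0 ≤ f a := by
    intro a
    exact Finset.sum_nonneg fun p _ =>
      mul_nonneg (hΔ0 a p) (add_nonneg (hH0 p) (hA0 p))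
  have hft0 : ∀ a, 0 ≤ ft a := by
    intro a
    exact Finset.sum_nonneg fun p _ => mul_nonneg (hΔ0 a p) (hxt0 p)
  set c : L → ℝ := fun a => t a (f a) + f a * deriv (t a) (f a) with hc_def
  -- derivative on positive flows
  have hderiv : ∀ a, 0 < f a → deriv (t a) (f a) = k a * (n * (f a) ^ (n - 1)) := by
    intro a hpos
    have hev : t a =ᶠ[nhds (f a)] fun x => k a * x ^ n + b a := by
      filter_upwards [Ioi_mem_nhds hpos] with x hx using ht a x (le_of_lt hx)
    rw [hev.deriv_eq]
    exact (((Real.hasDerivAt_rpow_const (p := n) (Or.inl hpos.ne')).const_mul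
      (k a)).add_const (b a)).deriv
  -- per-link inequality
  have hlink : ∀ a, f a * t a (f a) + c a * (ft a - f a) ≤ ft a * t a (ft a) ∧
      (ft a ≠ f a → f a * t a (f a) + c a * (ft a - f a) < ft a * t a (ft a)) := by
    intro a
    have hc0 : f a = 0 → c a = b a := by
      intro h0
      simp only [hc_def, h0, zero_mul, add_zero, ht a 0 le_rfl,
        Real.zero_rpow (by linarith : n ≠ 0), mul_zero, zero_add]
    have hcpos : 0 < f a → c a = k a * (f a) ^ n + b a + f a * (k a * (n * (f a) ^ (n - 1))) := by
      intro hpos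
      simp only [hc_def, ht a (f a) (hf0 a), hderiv a hpos]
    have := bpr_key n (k a) (b a) (f a) (ft a) (c a) hn (hk a) (hb a) (hf0 a) (hft0 a) hc0 hcpos
    rw [ht a (f a) (hf0 a), ht a (ft a) (hft0 a)]
    exact this
  -- sum over links, weak version
  have hsum_le : Scost t f + ∑ a, c a * (ft a - f a) ≤ Scost t ft := by
    have := Finset.sum_le_sum (fun a (_ : a ∈ Finset.univ) => (hlink a).1)
    rw [Finset.sum_add_distrib] at this
    exact this
  -- the correction term is nonnegative
  have hswap : ∑ a, c a * (ft a - f a) = ∑ p, CA Δ t f p * (xt p - (xH p + xA p)) := by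
    calc ∑ a, c a * (ft a - f a)
        = ∑ a, ∑ p, Δ a p * c a * (xt p - (xH p + xA p)) := by
          refine Finset.sum_congr rfl fun a _ => ?_
          have hdiff : ft a - f a = ∑ p, Δ a p * (xt p - (xH p + xA p)) := by
            simp only [hf_def, hft_def, aggFlow, ← Finset.sum_sub_distrib]
            exact Finset.sum_congr rfl fun p _ => by ring
          rw [hdiff, Finset.mul_sum]
          exact Finset.sum_congr rfl fun p _ => by ring
      _ = ∑ p, ∑ a, Δ a p * c a * (xt p - (xH p + xA p)) := Finset.sum_comm
      _ = ∑ p, CA Δ t f p * (xt p - (xH p + xA p)) := by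
          refine Finset.sum_congr rfl fun p _ => ?_
          rw [CA, Finset.sum_mul]
  have hAsumeq : ∑ p, CA Δ t f p * xA p = lamA * α := by
    have h1 : ∀ p, CA Δ t f p * xA p = lamA * xA p := by
      intro p
      rcases (hA0 p).eq_or_lt with h | h
      · rw [← h, mul_zero, mul_zero]
      · rw [(hwar p).2.2 h]
    rw [Finset.sum_congr rfl fun p _ => h1 p, ← Finset.mul_sum, hAsum]
  have hHge : lamA * α ≤ ∑ p, CA Δ t f p * (xt p - xH p) := by
    calc lamA * α = ∑ p, lamA * (xt p - xH p) := by
          rw [← Finset.mul_sum, Finset.sum_sub_distrib, hxtsum, hHsum]; ring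
      _ ≤ ∑ p, CA Δ t f p * (xt p - xH p) :=
          Finset.sum_le_sum fun p _ =>
            mul_le_mul_of_nonneg_right ((hwar p).2.1) (by linarith [hle p])
  have hcorr : 0 ≤ ∑ a, c a * (ft a - f a) := by
    rw [hswap]
    have hsplit : ∑ p, CA Δ t f p * (xt p - (xH p + xA p)) =
        (∑ p, CA Δ t f p * (xt p - xH p)) - ∑ p, CA Δ t f p * xA p := by
      rw [← Finset.sum_sub_distrib]
      exact Finset.sum_congr rfl fun p _ => by ring
    rw [hsplit, hAsumeq]
    linarith
  constructor
  · linarith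
  · intro hne
    have hex : ∃ a, ft a ≠ f a := by
      by_contra h
      push_neg at h
      exact hne (funext fun a => (h a).symm)
    obtain ⟨a0, ha0⟩ := hex
    have hstrict : ∑ a, (f a * t a (f a) + c a * (ft a - f a)) < ∑ a, ft a * t a (ft a) :=
      Finset.sum_lt_sum (fun a _ => (hlink a).1) ⟨a0, Finset.mem_univ a0, (hlink a0).2 ha0⟩
    rw [Finset.sum_add_distrib] at hstrict
    have : Scost t f + ∑ a, c a * (ft a - f a) < Scost t ft := hstrict
    linarith
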